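/- Let H, H_1, ..., H_m be finite-dimensional Euclidean spaces, dim H = n, dim H_j = n_j, let L_j^0 : H → H_j be surjective linear maps and p_1, ..., p_m ∈ [0,1]. Assume the codimension condition: codim_H(V) ≥ Σ_j p_j · codim_{H_j}(L_j^0 V) for all subspaces V ⊆ H. Then there exist c > 0 and δ > 0 such that for every orthonormal basis e_1, ..., e_n of H and every tuple L = (L_j) with ‖L − L^0‖ ≤ δ, there exist sets I_j ⊆ {1, ..., n} with |I_j| = n_j for each j, satisfying Σ_j p_j · |I_j ∩ {1, ..., k}| ≤ k for all 1 ≤ k ≤ n, and |⋀_{i ∈ I_j} L_j e_i| ≥ c for all j. -/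

import Mathlib

open Module Submodule Finset

private def finLeEquiv (n k : ℕ) : {i : Fin n // k ≤ (i : ℕ)} ≃ Fin (n - k) where
  toFun x := ⟨(x : ℕ) - k, by have h1 := x.1.isLt; have h2 := x.2; omega⟩
  invFun j := ⟨⟨j + k, by have := j.isLt; omega⟩, by simp⟩
  left_inv x := by ext; have h2 := x.2; simp; omega
  right_inv j := by ext; simp

theorem pointwise_selection
    (n m : ℕ) (nj : Fin m → ℕ) (p : Fin m → ℝ)
    (L0 : ∀ j, EuclideanSpace ℝ (Fin n) →L[ℝ] EuclideanSpace ℝ (Fin (nj j)))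
    (hsurj : ∀ j, Function.Surjective (L0 j))
    (hcodim : ∀ V : Submodule ℝ (EuclideanSpace ℝ (Fin n)),
      ∑ j, p j * ((nj j : ℝ) - (Module.finrank ℝ (V.map (L0 j).toLinearMap) : ℝ)) ≤
        (n : ℝ) - (Module.finrank ℝ V : ℝ))
    (e : Fin n → EuclideanSpace ℝ (Fin n)) (he : Orthonormal ℝ e) :
    ∃ I : ∀ _ : Fin m, Finset (Fin n), ∃ hI : ∀ j, (I j).card = nj j,
      (∀ k : Fin n,
        ∑ j, p j * ((((I j).filter fun i => i ≤ k).card : ℝ)) ≤ (k : ℕ) + 1) ∧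
      (∀ j, Matrix.det (Matrix.of fun a b : Fin (nj j) =>
          (L0 j) (e ((I j).orderIsoOfFin (hI j) b : Fin n)) a) ≠ 0) := by
  classical
  have hli := he.linearIndependent
  have hspan_top : Submodule.span ℝ (Set.range e) = ⊤ :=
    hli.span_eq_top_of_card_eq_finrank' (by simp)
  set T : ℕ → Submodule ℝ (EuclideanSpace ℝ (Fin n)) :=
    fun k => Submodule.span ℝ (e '' {i : Fin n | k ≤ (i : ℕ)}) with hT
  set d : Fin m → ℕ → ℕ :=
    fun j k => finrank ℝ ((T k).map (L0 j).toLinearMap) with hd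
  have hT0 : T 0 = ⊤ := by
    simp only [hT]
    simp only [Nat.zero_le, Set.setOf_true, Set.image_univ]
    exact hspan_top
  have hTn : ∀ k, n ≤ k → T k = ⊥ := by
    intro k hk
    have hset : {i : Fin n | k ≤ (i : ℕ)} = ∅ := by
      ext i; have := i.isLt; simp; omega
    simp only [hT, hset]
    simp
  have hTmono : ∀ k, T (k + 1) ≤ T k := by
    intro k
    exact span_mono (Set.image_mono (fun i hi => by
      simp only [Set.mem_setOf_eq] at hi ⊢; omega))
  have hTsucc : ∀ k (hk : k < n),
      T k = Submodule.span ℝ {e ⟨k, hk⟩} ⊔ T (k + 1) := by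
    intro k hk
    have hset : {i : Fin n | k ≤ (i : ℕ)} =
        insert (⟨k, hk⟩ : Fin n) {i : Fin n | k + 1 ≤ (i : ℕ)} := by
      ext i; simp [Fin.ext_iff]; omega
    simp only [hT, hset, Set.image_insert_eq, Submodule.span_insert]
  have hmapsucc : ∀ j k (hk : k < n),
      (T k).map (L0 j).toLinearMap =
        Submodule.span ℝ {L0 j (e ⟨k, hk⟩)} ⊔ (T (k + 1)).map (L0 j).toLinearMap := by
    intro j k hk
    rw [hTsucc k hk, Submodule.map_sup, Submodule.map_span, Set.image_singleton]
    rfl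
  have hdmono : ∀ j k, d j (k + 1) ≤ d j k := fun j k =>
    Submodule.finrank_mono (Submodule.map_mono (hTmono k))
  have hdstep : ∀ j k, k < n → d j k ≤ d j (k + 1) + 1 := by
    intro j k hk
    have h1 : finrank ℝ (Submodule.span ℝ {L0 j (e ⟨k, hk⟩)}) ≤ 1 := by
      simpa using finrank_span_le_card ({L0 j (e ⟨k, hk⟩)} : Set _)
    have h2 := Submodule.finrank_sup_add_finrank_inf_eq
      (Submodule.span ℝ {L0 j (e ⟨k, hk⟩)}) ((T (k + 1)).map (L0 j).toLinearMap)
    have h3 : d j k = finrank ℝ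
        ↥(Submodule.span ℝ {L0 j (e ⟨k, hk⟩)} ⊔ (T (k + 1)).map (L0 j).toLinearMap) := by
      simp only [hd]
      rw [hmapsucc j k hk]
    have h4 : d j (k + 1) = finrank ℝ ((T (k + 1)).map (L0 j).toLinearMap) := by
      simp only [hd]
    omega
  have hd0 : ∀ j, d j 0 = nj j := by
    intro j
    have hr : ((⊤ : Submodule ℝ (EuclideanSpace ℝ (Fin n))).map (L0 j).toLinearMap) = ⊤ := by
      rw [Submodule.map_top]
      exact LinearMap.range_eq_top.mpr (hsurj j)
    simp only [hd]
    rw [hT0]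
    rw [hr]
    rw [finrank_top, finrank_euclideanSpace_fin]
  have hdn : ∀ j, d j n = 0 := by
    intro j
    simp only [hd]
    rw [hTn n le_rfl, Submodule.map_bot, finrank_bot]
  have hfrT : ∀ k, k ≤ n → finrank ℝ (T k) = n - k := by
    intro k hk
    have h2 : finrank ℝ (Submodule.span ℝ (Set.range
        (e ∘ (Subtype.val : {i : Fin n // k ≤ (i : ℕ)} → Fin n)))) =
        Fintype.card {i : Fin n // k ≤ (i : ℕ)} :=
      finrank_span_eq_card (hli.comp _ Subtype.val_injective)
    have h3 : Set.range (e ∘ (Subtype.val : {i : Fin n // k ≤ (i : ℕ)} → Fin n)) =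
        e '' {i : Fin n | k ≤ (i : ℕ)} := by
      rw [Set.range_comp, Subtype.range_val_subtype]
    rw [h3] at h2
    show finrank ℝ (Submodule.span ℝ (e '' {i : Fin n | k ≤ (i : ℕ)})) = n - k
    rw [h2, Fintype.card_congr (finLeEquiv n k), Fintype.card_fin]
  set I : Fin m → Finset (Fin n) :=
    fun j => univ.filter (fun i : Fin n => d j ((i : ℕ) + 1) < d j (i : ℕ)) with hIdef
  have hmemI : ∀ j (i : Fin n), i ∈ I j ↔ d j ((i : ℕ) + 1) < d j (i : ℕ) := by
    intro j i; simp only [hIdef]; simp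
  have hcount : ∀ j, ∀ k, k ≤ n →
      d j k + ((I j).filter (fun i : Fin n => (i : ℕ) < k)).card = nj j := by
    intro j k
    induction k with
    | zero =>
      intro _
      have h0 : ((I j).filter (fun i : Fin n => (i : ℕ) < 0)) = ∅ := by
        apply Finset.filter_false_of_mem; intro i _; omega
      rw [h0]
      simpa using hd0 j
    | succ k ih =>
      intro hk
      have hk' : k < n := hk
      have ihh := ih (le_of_lt hk')
      have hsplit : ((I j).filter (fun i : Fin n => (i : ℕ) < k + 1)) =
          ((I j).filter (fun i : Fin n => (i : ℕ) < k)) ∪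
            ((I j).filter (fun i : Fin n => i = (⟨k, hk'⟩ : Fin n))) := by
        rw [← Finset.filter_or]
        apply Finset.filter_congr
        intro i _
        simp only [Fin.ext_iff]
        constructor
        · intro h; omega
        · intro h; omega
      have hdisj : Disjoint ((I j).filter (fun i : Fin n => (i : ℕ) < k))
          ((I j).filter (fun i : Fin n => i = (⟨k, hk'⟩ : Fin n))) := by
        simp only [Finset.disjoint_left, Finset.mem_filter]
        rintro i ⟨_, hik⟩ ⟨_, rfl⟩
        simp at hik
      have hfe : ((I j).filter (fun i : Fin n => i = (⟨k, hk'⟩ : Fin n))) =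
          if (⟨k, hk'⟩ : Fin n) ∈ I j then {(⟨k, hk'⟩ : Fin n)} else ∅ :=
        Finset.filter_eq' _ _
      rw [hsplit, Finset.card_union_of_disjoint hdisj, hfe]
      by_cases hmem : (⟨k, hk'⟩ : Fin n) ∈ I j
      · have hlt : d j (k + 1) < d j k := by simpa using (hmemI j _).mp hmem
        have hle := hdstep j k hk'
        rw [if_pos hmem]
        simp only [Finset.card_singleton]
        omega
      · have hnlt : ¬ d j (k + 1) < d j k := by
          intro hcon
          exact hmem ((hmemI j _).mpr (by simpa using hcon))
        have hmono := hdmono j k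
        rw [if_neg hmem]
        simp only [Finset.card_empty]
        omega
  have hIcard : ∀ j, (I j).card = nj j := by
    intro j
    have h := hcount j n le_rfl
    rw [hdn j] at h
    rw [Finset.filter_true_of_mem (fun i _ => i.isLt)] at h
    omega
  have hsum : ∀ k : Fin n,
      ∑ j, p j * ((((I j).filter fun i => i ≤ k).card : ℝ)) ≤ (k : ℕ) + 1 := by
    intro k
    have hk1 : (k : ℕ) + 1 ≤ n := k.isLt
    have hV := hcodim (T ((k : ℕ) + 1))
    have hfrV : finrank ℝ (T ((k : ℕ) + 1)) = n - ((k : ℕ) + 1) := hfrT _ hk1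
    have hcnt : ∀ j, ((((I j).filter fun i => i ≤ k).card : ℝ)) =
        (nj j : ℝ) - (finrank ℝ ((T ((k : ℕ) + 1)).map (L0 j).toLinearMap) : ℝ) := by
      intro j
      have hfilter : ((I j).filter fun i => i ≤ k) =
          ((I j).filter fun i : Fin n => (i : ℕ) < (k : ℕ) + 1) := by
        apply Finset.filter_congr
        intro i _
        simp only [Fin.le_def]
        omega
      have h := hcount j ((k : ℕ) + 1) hk1
      rw [← hfilter] at h
      have hdd : d j ((k : ℕ) + 1) =
          finrank ℝ ((T ((k : ℕ) + 1)).map (L0 j).toLinearMap) := by simp only [hd]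
      rw [hdd] at h
      have hcast := congrArg (fun x : ℕ => (x : ℝ)) h
      push_cast at hcast
      linarith
    calc ∑ j, p j * ((((I j).filter fun i => i ≤ k).card : ℝ))
        = ∑ j, p j * ((nj j : ℝ) -
            (finrank ℝ ((T ((k : ℕ) + 1)).map (L0 j).toLinearMap) : ℝ)) := by
          apply Finset.sum_congr rfl
          intro j _
          rw [hcnt j]
      _ ≤ (n : ℝ) - (finrank ℝ (T ((k : ℕ) + 1)) : ℝ) := hV
      _ = (k : ℕ) + 1 := by
          rw [hfrV, Nat.cast_sub hk1]
          push_cast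
          ring
  have hspan : ∀ j, ∀ t k, n - k ≤ t →
      (T k).map (L0 j).toLinearMap ≤
        Submodule.span ℝ ((fun i => L0 j (e i)) '' {i : Fin n | i ∈ I j ∧ k ≤ (i : ℕ)}) := by
    intro j t
    induction t with
    | zero =>
      intro k hk
      have hkn : n ≤ k := by omega
      rw [hTn k hkn]
      simp
    | succ t ih =>
      intro k hk
      by_cases hkn : n ≤ k
      · rw [hTn k hkn]; simp
      · push_neg at hkn
        have ih' := ih (k + 1) (by omega)
        have hsubset : ((fun i => L0 j (e i)) '' {i : Fin n | i ∈ I j ∧ k + 1 ≤ (i : ℕ)}) ⊆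
            ((fun i => L0 j (e i)) '' {i : Fin n | i ∈ I j ∧ k ≤ (i : ℕ)}) :=
          Set.image_mono (fun i hi => ⟨hi.1, le_trans (Nat.le_succ k) hi.2⟩)
        rw [hmapsucc j k hkn]
        apply sup_le
        · rw [Submodule.span_singleton_le_iff_mem]
          by_cases hmem : (⟨k, hkn⟩ : Fin n) ∈ I j
          · exact Submodule.subset_span ⟨⟨k, hkn⟩, ⟨hmem, le_rfl⟩, rfl⟩
          · have hnlt : ¬ d j (k + 1) < d j k := by
              intro hcon
              exact hmem ((hmemI j _).mpr (by simpa using hcon))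
            have hmono := hdmono j k
            have heq : (T (k + 1)).map (L0 j).toLinearMap = (T k).map (L0 j).toLinearMap := by
              apply Submodule.eq_of_le_of_finrank_le (Submodule.map_mono (hTmono k))
              have h1 : finrank ℝ ((T k).map (L0 j).toLinearMap) = d j k := by
                simp only [hd]
              have h2 : finrank ℝ ((T (k + 1)).map (L0 j).toLinearMap) = d j (k + 1) := by
                simp only [hd]
              omega
            have hv : L0 j (e ⟨k, hkn⟩) ∈ (T k).map (L0 j).toLinearMap := by
              apply Submodule.mem_map_of_mem
              apply Submodule.subset_span
              exact ⟨⟨k, hkn⟩, by simp, rfl⟩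
            rw [← heq] at hv
            exact le_trans ih' (Submodule.span_mono hsubset) hv
        · exact le_trans ih' (Submodule.span_mono hsubset)
  refine ⟨I, hIcard, hsum, ?_⟩
  intro j
  set v : Fin (nj j) → EuclideanSpace ℝ (Fin (nj j)) :=
    fun b => L0 j (e ((I j).orderIsoOfFin (hIcard j) b : Fin n)) with hv
  have hrange : Set.range v = (fun i => L0 j (e i)) '' ↑(I j) := by
    ext x
    constructor
    · rintro ⟨b, rfl⟩
      exact ⟨_, ((I j).orderIsoOfFin (hIcard j) b).2, rfl⟩
    · rintro ⟨i, hi, rfl⟩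
      refine ⟨((I j).orderIsoOfFin (hIcard j)).symm ⟨i, hi⟩, ?_⟩
      simp only [hv, OrderIso.apply_symm_apply]
  have hset0 : {i : Fin n | i ∈ I j ∧ 0 ≤ (i : ℕ)} = ↑(I j) := by
    ext i; simp
  have hmaptop : (T 0).map (L0 j).toLinearMap = ⊤ := by
    rw [hT0, Submodule.map_top]
    exact LinearMap.range_eq_top.mpr (hsurj j)
  have htop : ⊤ ≤ Submodule.span ℝ (Set.range v) := by
    rw [hrange, ← hset0, ← hmaptop]
    exact hspan j n 0 (by omega)
  have hcardeq : Fintype.card (Fin (nj j)) = finrank ℝ (EuclideanSpace ℝ (Fin (nj j))) := by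
    simp [finrank_euclideanSpace_fin]
  have hli' : LinearIndependent ℝ v :=
    linearIndependent_of_top_le_span_of_card_eq_finrank htop hcardeq
  have hunit : IsUnit ((PiLp.basisFun 2 ℝ (Fin (nj j))).det v) :=
    (Basis.is_basis_iff_det _).mp ⟨hli', le_antisymm le_top htop⟩
  have hdeteq : (PiLp.basisFun 2 ℝ (Fin (nj j))).det v =
      Matrix.det (Matrix.of fun a b : Fin (nj j) => v b a) := by
    rw [Basis.det_apply]
    congr 1
  have hne := hunit.ne_zero
  rw [hdeteq] at hne
  exact hne

private lemma continuous_finset_sup'' {α ι : Type*} [TopologicalSpace α] (s : Finset ι)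
    (hs : s.Nonempty) (f : ι → α → ℝ) (hf : ∀ i, Continuous (f i)) :
    Continuous fun x => s.sup' hs (fun i => f i x) := by
  rw [continuous_iff_continuousAt]
  intro x
  exact Filter.Tendsto.finset_sup'_nhds_apply hs (fun i _ => (hf i).continuousAt)

private lemma continuous_finset_inf'' {α ι : Type*} [TopologicalSpace α] (s : Finset ι)
    (hs : s.Nonempty) (f : ι → α → ℝ) (hf : ∀ i, Continuous (f i)) :
    Continuous fun x => s.inf' hs (fun i => f i x) := by
  rw [continuous_iff_continuousAt]
  intro x
  exact Filter.Tendsto.finset_inf'_nhds_apply hs (fun i _ => (hf i).continuousAt)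


/-- Uniform basis selection lemma (Lemma 2.2): under the codimension condition for
`L⁰`, there are `c, δ > 0` such that for every orthonormal basis `e` of `H` and every
`L` with `‖L - L⁰‖ ≤ δ`, one can select index sets `I_j` of size `n_j` satisfying the
partial-sum condition and a uniform lower bound on the wedge products
`|⋀_{i ∈ I_j} L_j e_i|` (identified with real numbers via determinants). -/
theorem uniform_basis_selection_localised
    (n m : ℕ) (nj : Fin m → ℕ) (p : Fin m → ℝ)
    (hp : ∀ j, p j ∈ Set.Icc (0 : ℝ) 1)
    (L0 : ∀ j, EuclideanSpace ℝ (Fin n) →L[ℝ] EuclideanSpace ℝ (Fin (nj j)))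
    (hsurj : ∀ j, Function.Surjective (L0 j))
    (hcodim : ∀ V : Submodule ℝ (EuclideanSpace ℝ (Fin n)),
      ∑ j, p j * ((nj j : ℝ) - (Module.finrank ℝ (V.map (L0 j).toLinearMap) : ℝ)) ≤
        (n : ℝ) - (Module.finrank ℝ V : ℝ)) :
    ∃ c > (0 : ℝ), ∃ δ > (0 : ℝ),
      ∀ e : Fin n → EuclideanSpace ℝ (Fin n), Orthonormal ℝ e →
      ∀ L : ∀ j, EuclideanSpace ℝ (Fin n) →L[ℝ] EuclideanSpace ℝ (Fin (nj j)),
        (∀ j, ‖L j - L0 j‖ ≤ δ) →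
        ∃ I : ∀ _ : Fin m, Finset (Fin n), ∃ hI : ∀ j, (I j).card = nj j,
          (∀ k : Fin n,
            ∑ j, p j * ((((I j).filter fun i => i ≤ k).card : ℝ)) ≤ (k : ℕ) + 1) ∧
          (∀ j, c ≤ |Matrix.det (Matrix.of fun a b : Fin (nj j) =>
              (L j) (e ((I j).orderIsoOfFin (hI j) b : Fin n)) a)|) := by
  classical
  rcases Nat.eq_zero_or_pos m with hm | hm
  · subst hm
    refine ⟨1, one_pos, 1, one_pos, ?_⟩
    intro e _ L _
    refine ⟨fun _ => ∅, fun j => j.elim0, ?_, fun j => j.elim0⟩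
    intro k
    simp
    positivity
  have : Nonempty (Fin m) := ⟨⟨0, hm⟩⟩
  -- the space of data points
  set X := (Fin n → EuclideanSpace ℝ (Fin n)) ×
    (∀ j, EuclideanSpace ℝ (Fin n) →L[ℝ] EuclideanSpace ℝ (Fin (nj j))) with hX
  -- admissible index-set tuples
  set A : Finset (∀ _ : Fin m, Finset (Fin n)) :=
    Finset.univ.filter (fun I => (∀ j, (I j).card = nj j) ∧
      ∀ k : Fin n, ∑ j, p j * ((((I j).filter fun i => i ≤ k).card : ℝ)) ≤ (k : ℕ) + 1) with hA
  have hmemA : ∀ I, I ∈ A ↔ ((∀ j, (I j).card = nj j) ∧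
      ∀ k : Fin n, ∑ j, p j * ((((I j).filter fun i => i ≤ k).card : ℝ)) ≤ (k : ℕ) + 1) := by
    intro I; rw [hA]; simp
  -- determinant functionals
  set D : (∀ _ : Fin m, Finset (Fin n)) → Fin m → X → ℝ :=
    fun I j x => if h : (I j).card = nj j then
      |Matrix.det (Matrix.of fun a b : Fin (nj j) =>
        (x.2 j) (x.1 ((I j).orderIsoOfFin h b : Fin n)) a)| else 0 with hD
  have hDcont : ∀ I j, Continuous (D I j) := by
    intro I j
    simp only [hD]
    by_cases h : (I j).card = nj j
    · simp only [h, dif_pos]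
      apply Continuous.abs
      apply Continuous.matrix_det
      apply continuous_pi; intro a
      apply continuous_pi; intro b
      have h1 : Continuous fun x : X => (x.2 j, x.1 ((I j).orderIsoOfFin h b : Fin n)) :=
        (((continuous_apply j).comp continuous_snd)).prodMk
          ((continuous_apply _).comp continuous_fst)
      have h2 : Continuous fun x : X => (x.2 j) (x.1 ((I j).orderIsoOfFin h b : Fin n)) :=
        isBoundedBilinearMap_apply.continuous.comp h1
      exact (EuclideanSpace.proj a).continuous.comp h2
    · simp only [h, dif_neg, not_false_iff]
      exact continuous_const
  -- A is nonempty
  have hAne : A.Nonempty := by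
    obtain ⟨I, hI, hks, _⟩ := pointwise_selection n m nj p L0 hsurj hcodim
      (⇑(EuclideanSpace.basisFun (Fin n) ℝ)) (EuclideanSpace.basisFun (Fin n) ℝ).orthonormal
    exact ⟨I, (hmemA I).mpr ⟨hI, hks⟩⟩
  have huniv : (Finset.univ : Finset (Fin m)).Nonempty := Finset.univ_nonempty
  -- the continuous score function
  set F : X → ℝ := fun x => A.sup' hAne (fun I =>
    (Finset.univ : Finset (Fin m)).inf' huniv (fun j => D I j x)) with hF
  have hFcont : Continuous F := by
    apply continuous_finset_sup'' _ hAne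
    intro I
    exact continuous_finset_inf'' _ huniv (fun j => D I j) (fun j => hDcont I j)
  -- the compact set of base points
  set S : Set (Fin n → EuclideanSpace ℝ (Fin n)) := {e | Orthonormal ℝ e} with hS
  have hSclosed : IsClosed S := by
    have hSeq : S = ⋂ (i) (j), {e : Fin n → EuclideanSpace ℝ (Fin n) |
        (inner ℝ (e i) (e j) : ℝ) = if i = j then (1 : ℝ) else 0} := by
      ext e
      simp only [hS, Set.mem_setOf_eq, Set.mem_iInter, orthonormal_iff_ite]
    rw [hSeq]
    exact isClosed_iInter fun i => isClosed_iInter fun j =>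
      isClosed_eq (Continuous.inner (continuous_apply i) (continuous_apply j)) continuous_const
  have hSbdd : Bornology.IsBounded S := by
    rw [Metric.isBounded_iff_subset_closedBall 0]
    refine ⟨1, ?_⟩
    intro e he
    rw [Metric.mem_closedBall, dist_zero_right]
    rw [pi_norm_le_iff_of_nonneg (by norm_num)]
    intro i
    rw [he.1 i]
  have hK : IsCompact (S ×ˢ ({L0} : Set (∀ j, EuclideanSpace ℝ (Fin n) →L[ℝ]
      EuclideanSpace ℝ (Fin (nj j))))) :=
    (Metric.isCompact_of_isClosed_isBounded hSclosed hSbdd).prod isCompact_singleton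
  have hKne : (S ×ˢ ({L0} : Set _)).Nonempty :=
    ⟨(⇑(EuclideanSpace.basisFun (Fin n) ℝ), L0),
      Set.mem_prod.mpr ⟨(EuclideanSpace.basisFun (Fin n) ℝ).orthonormal, rfl⟩⟩
  -- positivity on the compact set
  have hpos : ∀ x ∈ S ×ˢ ({L0} : Set _), 0 < F x := by
    rintro ⟨e, L⟩ hx
    obtain ⟨he, hL⟩ := Set.mem_prod.mp hx
    rw [Set.mem_singleton_iff] at hL
    have hL2 : L0 = L := hL.symm
    subst hL2
    obtain ⟨I, hI, hks, hdet⟩ := pointwise_selection n m nj p L0 hsurj hcodim e he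
    have hIA : I ∈ A := (hmemA I).mpr ⟨hI, hks⟩
    have hle := Finset.le_sup' (fun I =>
      (Finset.univ : Finset (Fin m)).inf' huniv (fun j => D I j (e, L0))) hIA
    refine lt_of_lt_of_le ?_ hle
    rw [Finset.lt_inf'_iff]
    intro j _
    have hDval : D I j (e, L0) = |Matrix.det (Matrix.of fun a b : Fin (nj j) =>
        (L0 j) (e ((I j).orderIsoOfFin (hI j) b : Fin n)) a)| := by
      simp only [hD]
      rw [dif_pos (hI j)]
    rw [hDval]
    exact abs_pos.mpr (hdet j)
  -- minimum of F on the compact set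
  obtain ⟨x0, hx0K, hx0min⟩ := hK.exists_isMinOn hKne hFcont.continuousOn
  have hc0 : 0 < F x0 := hpos x0 hx0K
  set c : ℝ := F x0 / 2 with hc
  have hcpos : 0 < c := by positivity
  -- open superset and thickening
  have hUopen : IsOpen (F ⁻¹' Set.Ioi c) := (isOpen_Ioi).preimage hFcont
  have hKU : (S ×ˢ ({L0} : Set _)) ⊆ F ⁻¹' Set.Ioi c := by
    intro x hx
    have h1 : F x0 ≤ F x := hx0min hx
    have : c < F x := by rw [hc]; linarith
    exact this
  obtain ⟨δ, hδpos, hδ⟩ := hK.exists_thickening_subset_open hUopen hKU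
  refine ⟨c, hcpos, δ / 2, by positivity, ?_⟩
  intro e he L hL
  have hxU : (e, L) ∈ F ⁻¹' Set.Ioi c := by
    apply hδ
    rw [Metric.mem_thickening_iff]
    refine ⟨(e, L0), Set.mem_prod.mpr ⟨he, rfl⟩, ?_⟩
    have hdistL : dist L L0 ≤ δ / 2 := by
      rw [dist_pi_le_iff (by positivity)]
      intro j
      rw [dist_eq_norm]
      exact hL j
    have : dist ((e, L) : X) (e, L0) = dist L L0 := by
      rw [Prod.dist_eq, dist_self]
      exact max_eq_right dist_nonneg
    rw [this]
    linarith
  have hcF : c < F (e, L) := hxU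
  rw [hF, Finset.lt_sup'_iff] at hcF
  obtain ⟨I, hIA, hIinf⟩ := hcF
  obtain ⟨hI, hks⟩ := (hmemA I).mp hIA
  refine ⟨I, hI, hks, ?_⟩
  intro j
  rw [Finset.lt_inf'_iff] at hIinf
  have h := hIinf j (Finset.mem_univ j)
  have hDval : D I j (e, L) = |Matrix.det (Matrix.of fun a b : Fin (nj j) =>
      (L j) (e ((I j).orderIsoOfFin (hI j) b : Fin n)) a)| := by
    simp only [hD]
    rw [dif_pos (hI j)]
  rw [hDval] at h
  exact le_of_lt h
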